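/- Hardy's nonlocality argument for two qubits: Let (Ω, μ) be a probability space and let A₁, A₂, B₁, B₂ : Ω → {−1, +1} be measurable functions (a local hidden variable model for Hardy's test). If μ({A₁ = +1} ∩ {B₁ = +1}) = 0, μ({A₂ = +1} ∩ {B₁ = −1}) = 0, and μ({A₁ = −1} ∩ {B₂ = +1}) = 0, then μ({A₂ = +1} ∩ {B₂ = +1}) = 0. -/

import Mathlib

open MeasureTheory

/-- Hardy's nonlocality argument for two qubits: in any local hidden variable model
(probability space with four measurable ±1-valued random variables), if the three
Hardy constraints hold with probability zero, then the Hardy event `A₂ = +1 ∧ B₂ = +1`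
also has probability zero. -/
theorem hardy_lhv_probability_zero {Ω : Type*} [MeasurableSpace Ω]
    (μ : Measure Ω) [IsProbabilityMeasure μ]
    (A₁ A₂ B₁ B₂ : Ω → ℝ)
    (hA₁ : Measurable A₁) (hA₂ : Measurable A₂)
    (hB₁ : Measurable B₁) (hB₂ : Measurable B₂)
    (hA₁v : ∀ ω, A₁ ω = 1 ∨ A₁ ω = -1) (hA₂v : ∀ ω, A₂ ω = 1 ∨ A₂ ω = -1)
    (hB₁v : ∀ ω, B₁ ω = 1 ∨ B₁ ω = -1) (hB₂v : ∀ ω, B₂ ω = 1 ∨ B₂ ω = -1)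
    (h1 : μ ({ω | A₁ ω = 1} ∩ {ω | B₁ ω = 1}) = 0)
    (h2 : μ ({ω | A₂ ω = 1} ∩ {ω | B₁ ω = -1}) = 0)
    (h3 : μ ({ω | A₁ ω = -1} ∩ {ω | B₂ ω = 1}) = 0) :
    μ ({ω | A₂ ω = 1} ∩ {ω | B₂ ω = 1}) = 0 := by
  have hsub : ({ω | A₂ ω = 1} ∩ {ω | B₂ ω = 1}) ⊆
      (({ω | A₁ ω = 1} ∩ {ω | B₁ ω = 1}) ∪ ({ω | A₂ ω = 1} ∩ {ω | B₁ ω = -1})) ∪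
      ({ω | A₁ ω = -1} ∩ {ω | B₂ ω = 1}) := by
    rintro ω ⟨hA2, hB2⟩
    rcases hB₁v ω with hB1 | hB1
    · rcases hA₁v ω with hA1 | hA1
      · exact Or.inl (Or.inl ⟨hA1, hB1⟩)
      · exact Or.inr ⟨hA1, hB2⟩
    · exact Or.inl (Or.inr ⟨hA2, hB1⟩)
  refine measure_mono_null hsub ?_
  refine le_antisymm ?_ (zero_le ..)
  calc μ _ ≤ μ (({ω | A₁ ω = 1} ∩ {ω | B₁ ω = 1}) ∪ ({ω | A₂ ω = 1} ∩ {ω | B₁ ω = -1}))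
        + μ ({ω | A₁ ω = -1} ∩ {ω | B₂ ω = 1}) := measure_union_le _ _
    _ ≤ μ ({ω | A₁ ω = 1} ∩ {ω | B₁ ω = 1}) + μ ({ω | A₂ ω = 1} ∩ {ω | B₁ ω = -1}) + μ _ :=
        add_le_add (measure_union_le _ _) le_rfl
    _ = 0 := by rw [h1, h2, h3]; simp
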